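/- Let D be the unique ℚ-linear derivation of the polynomial ring ℚ[x,z] satisfying D(z) = x²z and D(x) = x². Then for every n ≥ 1, D^n(z) = x^n z Σ_{k=1}^{n} L(n,k) x^k, where L(n,k) = C(n-1,k-1) · n!/k! is the signless Lah number. -/

import Mathlib

open MvPolynomial

/-- The signless Lah number `L(n,k) = C(n-1,k-1) · n!/k!`, as a rational number. -/
def lah (n k : ℕ) : ℚ :=
  ((n - 1).choose (k - 1) : ℚ) * (n.factorial : ℚ) / (k.factorial : ℚ)

private lemma nat_id (m i : ℕ) :
    (m+1).choose (i+1) * (m+2).factorial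
      = (m + 1 + (i + 2)) * ((m.choose (i+1)) * (m+1).factorial)
        + (i+2) * ((m.choose i) * (m+1).factorial) := by
  have key : m.choose (i+1) * (i+1) = m.choose i * (m - i) := Nat.choose_succ_right_eq m i
  rcases le_or_gt i m with h | h
  · have key2 : (m.choose (i+1) : ℤ) * (i+1) = (m.choose i : ℤ) * ((m:ℤ) - i) := by
      zify [h] at key; linarith [key]
    rw [Nat.choose_succ_succ, show (m+2).factorial = (m+2) * (m+1).factorial from rfl]
    zify
    linear_combination (-((m+1).factorial : ℤ)) * key2
  · have h1 : m.choose (i+1) = 0 := Nat.choose_eq_zero_of_lt (by omega)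
    have h2 : m.choose i = 0 := Nat.choose_eq_zero_of_lt h
    have h3 : (m+1).choose (i+1) = 0 := Nat.choose_eq_zero_of_lt (by omega)
    simp [h1, h2, h3]

private lemma lah_succ (n j : ℕ) (hn : 1 ≤ n) (h1 : 1 ≤ j) (h2 : j ≤ n + 1) :
    lah (n+1) j = ((n:ℚ) + j) * lah n j + (if j = 1 then 0 else lah n (j-1)) := by
  rcases Nat.lt_or_ge j 2 with hj | hj
  · have : j = 1 := by omega
    subst this
    simp only [if_pos rfl, add_zero, lah]
    simp [Nat.factorial_succ]
  · obtain ⟨i, rfl⟩ : ∃ i, j = i + 2 := ⟨j - 2, by omega⟩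
    obtain ⟨m, rfl⟩ : ∃ m, n = m + 1 := ⟨n - 1, by omega⟩
    rw [if_neg (by omega)]
    simp only [lah, show m + 1 + 1 - 1 = m + 1 from rfl, show i + 2 - 1 = i + 1 from rfl,
      show m + 1 - 1 = m from rfl, show i + 2 - 1 - 1 = i from rfl]
    have hne1 : ((i+2).factorial : ℚ) ≠ 0 := by positivity
    have hne2 : ((i+1).factorial : ℚ) ≠ 0 := by positivity
    have hid' : ((m+1).choose (i+1) : ℚ) * (m+2).factorial
        = ((m:ℚ) + 1 + (i + 2)) * ((m.choose (i+1)) * (m+1).factorial)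
          + ((i:ℚ)+2) * ((m.choose i) * (m+1).factorial) := by
      exact_mod_cast congrArg (Nat.cast : ℕ → ℚ) (nat_id m i)
    have hF : ((m+1+1).factorial : ℚ) = (m+2).factorial := by norm_num
    have hf : ((i+2).factorial : ℚ) = (i+2) * (i+1).factorial := by
      push_cast [Nat.factorial_succ]; ring
    simp only [Nat.add_sub_cancel]
    field_simp
    rw [hF, hf]
    push_cast
    linear_combination ((i+1).factorial:ℚ) * hid'

private lemma hmon (D : Derivation ℚ (MvPolynomial (Fin 2) ℚ) (MvPolynomial (Fin 2) ℚ))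
    (hz : D (X 1) = X 0 ^ 2 * X 1) (hx : D (X 0) = X 0 ^ 2)
    (m : ℕ) (hm : 1 ≤ m) :
    D (X 0 ^ m * X 1) = ((m:ℚ)) • (X 0 ^ (m+1) * X 1) + (X 0 ^ (m+2) * X 1) := by
  obtain ⟨m', rfl⟩ : ∃ m', m = m' + 1 := ⟨m - 1, by omega⟩
  rw [Derivation.leibniz, Derivation.leibniz_pow, hx, hz, Nat.cast_smul_eq_nsmul]
  simp only [Nat.add_sub_cancel, smul_eq_mul, nsmul_eq_mul]
  push_cast
  ring

private lemma lah_top (n : ℕ) (hn : 1 ≤ n) : lah n (n+1) = 0 := by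
  have h : (n-1).choose (n+1-1) = 0 := Nat.choose_eq_zero_of_lt (by omega)
  simp only [lah, h, Nat.cast_zero, zero_mul, zero_div]

private lemma Dpow (D : Derivation ℚ (MvPolynomial (Fin 2) ℚ) (MvPolynomial (Fin 2) ℚ))
    (hz : D (X 1) = X 0 ^ 2 * X 1) (hx : D (X 0) = X 0 ^ 2)
    (n : ℕ) (hn : 1 ≤ n) :
    (⇑D)^[n] (X 1) = ∑ k ∈ Finset.Icc 1 n, lah n k • (X 0 ^ (n+k) * X 1) := by
  induction n with
  | zero => omega
  | succ n ih =>
    rcases Nat.lt_or_ge n 1 with h1 | h1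
    · interval_cases n
      simp [hz, lah, Nat.factorial, smul_eq_C_mul]
    · rw [Function.iterate_succ_apply', ih h1, map_sum]
      have step : ∀ k ∈ Finset.Icc 1 n,
          D (lah n k • (X 0 ^ (n+k) * X 1))
            = (((n:ℚ)+k) * lah n k) • (X 0 ^ (n+1+k) * X 1)
              + lah n k • (X 0 ^ (n+1+(k+1)) * X 1) := by
        intro k hk
        simp only [Finset.mem_Icc] at hk
        rw [Derivation.map_smul, hmon D hz hx (n+k) (by omega), smul_add, smul_smul]
        push_cast
        rw [mul_comm (lah n k)]
        congr 2 <;> ring_nf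
      rw [Finset.sum_congr rfl step, Finset.sum_add_distrib]
      have reidx : (∑ k ∈ Finset.Icc 1 n, lah n k • ((X 0 : MvPolynomial (Fin 2) ℚ) ^ (n+1+(k+1)) * X 1))
          = ∑ j ∈ Finset.Icc 2 (n+1), lah n (j-1) • (X 0 ^ (n+1+j) * X 1) := by
        have hmap : Finset.map (addLeftEmbedding (1:ℕ)) (Finset.Icc 1 n) = Finset.Icc 2 (n+1) := by
          rw [Finset.map_add_left_Icc]; congr 1 <;> omega
        rw [← hmap, Finset.sum_map]
        apply Finset.sum_congr rfl
        intro k hk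
        simp [addLeftEmbedding, add_comm]
      rw [reidx]
      have expand : (∑ j ∈ Finset.Icc 1 (n+1), lah (n+1) j • ((X 0 : MvPolynomial (Fin 2) ℚ) ^ (n+1+j) * X 1))
          = ∑ j ∈ Finset.Icc 1 (n+1),
              ((((n:ℚ)+j) * lah n j) • (X 0 ^ (n+1+j) * X 1)
               + (if j = 1 then 0 else lah n (j-1)) • (X 0 ^ (n+1+j) * X 1)) := by
        apply Finset.sum_congr rfl
        intro j hj
        simp only [Finset.mem_Icc] at hj
        rw [lah_succ n j h1 hj.1 hj.2, add_smul]
      rw [expand, Finset.sum_add_distrib]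
      congr 1
      · rw [Finset.sum_Icc_succ_top (by omega), lah_top n h1]
        push_cast
        simp
      · have hins : Finset.Icc 1 (n+1) = insert 1 (Finset.Icc 2 (n+1)) := by
          ext x; simp [Finset.mem_Icc]; omega
        rw [hins, Finset.sum_insert (by simp)]
        rw [if_pos rfl, zero_smul, zero_add]
        apply Finset.sum_congr rfl
        intro j hj
        simp only [Finset.mem_Icc] at hj
        rw [if_neg (by omega)]

/-- Here `X 0` plays the role of `x` and `X 1` plays the role of `z`. -/
theorem stmt7
    (D : Derivation ℚ (MvPolynomial (Fin 2) ℚ) (MvPolynomial (Fin 2) ℚ))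
    (hz : D (X 1) = X 0 ^ 2 * X 1) (hx : D (X 0) = X 0 ^ 2)
    (n : ℕ) (hn : 1 ≤ n) :
    (⇑D)^[n] (X 1) =
      X 0 ^ n * X 1 * ∑ k ∈ Finset.Icc 1 n, C (lah n k) * X 0 ^ k := by
  rw [Dpow D hz hx n hn, Finset.mul_sum]
  apply Finset.sum_congr rfl
  intro k hk
  rw [smul_eq_C_mul, pow_add]
  ring
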